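/- Let $A$ be a set of $m$ points and $F$ a uniformly random perfect matching of $A$ (so $m$ is even). For $X \subseteq A$ with $|X| = k \le m/2$, let $F(X)$ denote the set of points matched to points of $X$. Then $|X \cap F(X)|$ is stochastically dominated by $\mathrm{Bin}(k, \sqrt{k/m})$. -/

import Mathlib

open Finset

/-- The perfect matchings of `Fin m`, viewed as fixed-point-free involutions. -/
def perfectMatchings (m : ℕ) : Finset (Equiv.Perm (Fin m)) :=
  Finset.univ.filter (fun f => ∀ x, f (f x) = x ∧ f x ≠ x)

/-- The upper tail `ℙ(Bin(n,p) ≥ x)` of a binomial random variable. -/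
noncomputable def binomialTail (n : ℕ) (p : ℝ) (x : ℕ) : ℝ :=
  ∑ k ∈ Finset.Icc x n, (n.choose k : ℝ) * p ^ k * (1 - p) ^ (n - k)


variable {p : ℝ}

lemma bt_nonneg (hp0 : 0 ≤ p) (hp1 : p ≤ 1) (n x : ℕ) : 0 ≤ binomialTail n p x := by
  apply Finset.sum_nonneg
  intro k _
  have : (0:ℝ) ≤ 1 - p := by linarith
  positivity

lemma bt_zero (n : ℕ) : binomialTail n p 0 = 1 := by
  have h : Finset.Icc 0 n = Finset.range (n+1) := by
    ext k; simp [Nat.lt_succ_iff]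
  rw [binomialTail, h]
  have h2 := add_pow p (1-p) n
  have h3 : p + (1-p) = 1 := by ring
  rw [h3, one_pow] at h2
  conv_rhs => rw [h2]
  apply Finset.sum_congr rfl
  intro k _; ring

lemma bt_anti (hp0 : 0 ≤ p) (hp1 : p ≤ 1) (n : ℕ) {x y : ℕ} (hxy : x ≤ y) :
    binomialTail n p y ≤ binomialTail n p x := by
  apply Finset.sum_le_sum_of_subset_of_nonneg
  · exact Finset.Icc_subset_Icc_left hxy
  · intro k _ _
    have : (0:ℝ) ≤ 1 - p := by linarith
    positivity

lemma bt_le_one (hp0 : 0 ≤ p) (hp1 : p ≤ 1) (n x : ℕ) : binomialTail n p x ≤ 1 := by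
  calc binomialTail n p x ≤ binomialTail n p 0 := bt_anti hp0 hp1 n (Nat.zero_le x)
    _ = 1 := bt_zero n

lemma bt_pascal (n x : ℕ) :
    binomialTail (n+1) p x = p * binomialTail n p (x-1) + (1-p) * binomialTail n p x := by
  cases x with
  | zero => simp only [Nat.zero_sub, bt_zero]; ring
  | succ y =>
    have himg : Finset.Icc (y+1) (n+1) = (Finset.Icc y n).image Nat.succ := by
      ext k; simp only [Finset.mem_Icc, Finset.mem_image]
      constructor
      · rintro ⟨h1, h2⟩; exact ⟨k-1, by omega, by omega⟩
      · rintro ⟨j, ⟨h1, h2⟩, rfl⟩; omega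
    have hinj : ∀ a ∈ Finset.Icc y n, ∀ b ∈ Finset.Icc y n, Nat.succ a = Nat.succ b → a = b := by
      intro a _ b _ h; omega
    have hsplit : ∀ j ∈ Finset.Icc y n,
        (((n+1).choose (Nat.succ j) : ℝ) * p ^ (Nat.succ j) * (1-p) ^ (n + 1 - Nat.succ j))
        = p * ((n.choose j : ℝ) * p ^ j * (1-p) ^ (n - j))
          + (n.choose (j+1) : ℝ) * p ^ (j+1) * (1-p) ^ (n + 1 - (j+1)) := by
      intro j hj
      simp only [Nat.succ_eq_add_one, Nat.choose_succ_succ,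
        Nat.succ_sub_succ (n) (j)]
      push_cast
      ring
    have h2 : ∑ j ∈ Finset.Icc y n, ((n.choose (j+1) : ℝ) * p ^ (j+1) * (1-p) ^ (n + 1 - (j+1)))
        = (1-p) * binomialTail n p (y+1) := by
      have e1 : ∑ j ∈ Finset.Icc y n, ((n.choose (j+1) : ℝ) * p ^ (j+1) * (1-p) ^ (n + 1 - (j+1)))
          = ∑ k ∈ Finset.Icc (y+1) (n+1), ((n.choose k : ℝ) * p ^ k * (1-p) ^ (n + 1 - k)) := by
        rw [himg, Finset.sum_image hinj]
      rw [e1, binomialTail, Finset.mul_sum]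
      rw [← Finset.sum_subset (Finset.Icc_subset_Icc_right (Nat.le_succ n))]
      · apply Finset.sum_congr rfl
        intro k hk
        rw [Finset.mem_Icc] at hk
        rw [show n + 1 - k = (n - k) + 1 by omega]
        ring
      · intro k hk hk2
        rw [Finset.mem_Icc] at hk
        rw [Finset.mem_Icc] at hk2
        rw [Nat.choose_eq_zero_of_lt (by omega : n < k)]
        simp
    rw [show y + 1 - 1 = y from rfl]
    rw [binomialTail, himg, Finset.sum_image hinj,
      Finset.sum_congr rfl hsplit, Finset.sum_add_distrib, h2, ← Finset.mul_sum]
    rfl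

lemma bt_mono_n (hp0 : 0 ≤ p) (hp1 : p ≤ 1) (n x : ℕ) :
    binomialTail n p x ≤ binomialTail (n+1) p x := by
  rw [bt_pascal]
  have h := bt_anti hp0 hp1 n (show x - 1 ≤ x by omega)
  nlinarith [bt_nonneg hp0 hp1 n x, bt_nonneg hp0 hp1 n (x-1)]

lemma bt_shift (hp0 : 0 ≤ p) (hp1 : p ≤ 1) (n x : ℕ) :
    binomialTail (n+1) p x ≤ binomialTail n p (x-1) := by
  rw [bt_pascal]
  have h := bt_anti hp0 hp1 n (show x - 1 ≤ x by omega)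
  nlinarith

lemma bt_key {q : ℝ} (hp0 : 0 ≤ p) (hp1 : p ≤ 1) (hq0 : 0 ≤ q) (hqp : q ≤ p^2) (n x : ℕ) :
    q * binomialTail n p (x-2) + (1-q) * binomialTail (n+1) p x
      ≤ binomialTail (n+2) p x := by
  have e2 : binomialTail (n+1) p (x-1)
      = p * binomialTail n p (x-2) + (1-p) * binomialTail n p (x-1) := by
    have h := bt_pascal (p := p) n (x-1)
    rwa [show x-1-1 = x-2 by omega] at h
  have e1 : binomialTail (n+2) p x
      = p * binomialTail (n+1) p (x-1) + (1-p) * binomialTail (n+1) p x :=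
    bt_pascal (n+1) x
  rw [e1, e2]
  have hCB : binomialTail (n+1) p x ≤ binomialTail n p (x-1) := bt_shift hp0 hp1 n x
  have hBA : binomialTail n p (x-1) ≤ binomialTail n p (x-2) :=
    bt_anti hp0 hp1 n (by omega)
  have hpp : p^2 ≤ p := by nlinarith
  nlinarith [mul_nonneg (sub_nonneg.2 hqp) (sub_nonneg.2 hBA),
    mul_nonneg (sub_nonneg.2 (hqp.trans hpp)) (sub_nonneg.2 hCB)]

def matchingsOn (m : ℕ) (A : Finset (Fin m)) : Finset (Equiv.Perm (Fin m)) :=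
  univ.filter (fun f => (∀ x ∈ A, f (f x) = x ∧ f x ≠ x) ∧ ∀ x ∉ A, f x = x)

variable {m : ℕ}

lemma mem_mo {A : Finset (Fin m)} {f : Equiv.Perm (Fin m)} :
    f ∈ matchingsOn m A ↔ ((∀ x ∈ A, f (f x) = x ∧ f x ≠ x) ∧ ∀ x ∉ A, f x = x) := by
  simp [matchingsOn]

lemma mo_apply_mem {A : Finset (Fin m)} {f : Equiv.Perm (Fin m)}
    (hf : f ∈ matchingsOn m A) {a : Fin m} (ha : a ∈ A) : f a ∈ A := by
  rw [mem_mo] at hf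
  by_contra h
  exact (hf.1 a ha).2 (f.injective (hf.2 _ h))

lemma mem_pair {a b x : Fin m} : x ∈ ({a, b} : Finset (Fin m)) ↔ x = a ∨ x = b := by
  simp

lemma mo_swap_mem {A : Finset (Fin m)} {a b : Fin m} (ha : a ∈ A) (hb : b ∈ A) (hab : a ≠ b)
    {f : Equiv.Perm (Fin m)} (hf : f ∈ matchingsOn m A) (hfa : f a = b) :
    (Equiv.swap a b).trans f ∈ matchingsOn m (A \ {a, b}) := by
  have hf' := hf
  rw [mem_mo] at hf ⊢
  have hfb : f b = a := by rw [← hfa]; exact (hf.1 a ha).1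
  have key : ∀ x ∈ A, x ≠ a → x ≠ b → (f x ∈ A ∧ f x ≠ a ∧ f x ≠ b) := by
    intro x hx hxa hxb
    refine ⟨mo_apply_mem hf' hx, ?_, ?_⟩
    · intro h
      apply hxb
      have e := (hf.1 x hx).1
      rw [h, hfa] at e
      exact e.symm
    · intro h
      exact hxa (f.injective (h.trans hfa.symm))
  constructor
  · intro x hx
    rw [Finset.mem_sdiff, mem_pair] at hx
    obtain ⟨hxA, hx2⟩ := hx
    push_neg at hx2
    obtain ⟨hxa, hxb⟩ := hx2
    obtain ⟨h1, h2, h3⟩ := key x hxA hxa hxb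
    have e1 : (Equiv.swap a b).trans f x = f x := by
      simp [Equiv.trans_apply, Equiv.swap_apply_of_ne_of_ne hxa hxb]
    refine ⟨?_, ?_⟩
    · rw [e1]
      simp only [Equiv.trans_apply, Equiv.swap_apply_of_ne_of_ne h2 h3]
      exact (hf.1 x hxA).1
    · rw [e1]; exact (hf.1 x hxA).2
  · intro x hx
    rw [Finset.mem_sdiff] at hx
    push_neg at hx
    by_cases hxa : x = a
    · subst hxa; simp [Equiv.trans_apply, hfb]
    by_cases hxb : x = b
    · subst hxb; simp [Equiv.trans_apply, hfa]
    · have hxA : x ∉ A := by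
        intro hA
        have := hx hA
        rw [mem_pair] at this
        tauto
      simp [Equiv.trans_apply, Equiv.swap_apply_of_ne_of_ne hxa hxb, hf.2 x hxA]

lemma mo_swap_mem' {A : Finset (Fin m)} {a b : Fin m} (ha : a ∈ A) (hb : b ∈ A) (hab : a ≠ b)
    {g : Equiv.Perm (Fin m)} (hg : g ∈ matchingsOn m (A \ {a, b})) :
    (Equiv.swap a b).trans g ∈ matchingsOn m A ∧ ((Equiv.swap a b).trans g) a = b := by
  have hg' := hg
  rw [mem_mo] at hg
  have hgfix : ∀ x, x ∉ A ∨ x = a ∨ x = b → g x = x := by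
    intro x hx
    apply hg.2
    rw [Finset.mem_sdiff, mem_pair]
    tauto
  have hga : g a = a := hgfix a (Or.inr (Or.inl rfl))
  have hgb : g b = b := hgfix b (Or.inr (Or.inr rfl))
  have hfa : ((Equiv.swap a b).trans g) a = b := by
    simp [Equiv.trans_apply, hgb]
  refine ⟨mem_mo.2 ⟨?_, ?_⟩, hfa⟩
  · intro x hx
    by_cases hxa : x = a
    · subst hxa
      refine ⟨?_, by rw [hfa]; exact hab.symm⟩
      rw [hfa]
      simp [Equiv.trans_apply, hga]
    by_cases hxb : x = b
    · have hfb : ((Equiv.swap a b).trans g) b = a := by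
        simp [Equiv.trans_apply, hga]
      subst hxb
      rw [hfb, hfa]
      exact ⟨rfl, hab⟩
    · have hxAB : x ∈ A \ {a, b} := by
        rw [Finset.mem_sdiff, mem_pair]; tauto
      have e1 : ((Equiv.swap a b).trans g) x = g x := by
        simp [Equiv.trans_apply, Equiv.swap_apply_of_ne_of_ne hxa hxb]
      have hgx : g x ∈ A \ {a, b} := mo_apply_mem hg' hxAB
      rw [Finset.mem_sdiff, mem_pair] at hgx
      push_neg at hgx
      refine ⟨?_, by rw [e1]; exact (hg.1 x hxAB).2⟩
      rw [e1]
      simp only [Equiv.trans_apply, Equiv.swap_apply_of_ne_of_ne hgx.2.1 hgx.2.2]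
      exact (hg.1 x hxAB).1
  · intro x hx
    have hxa : x ≠ a := fun h => hx (h ▸ ha)
    have hxb : x ≠ b := fun h => hx (h ▸ hb)
    simp only [Equiv.trans_apply, Equiv.swap_apply_of_ne_of_ne hxa hxb]
    exact hgfix x (Or.inl hx)

lemma swap_trans_twice (a b : Fin m) (f : Equiv.Perm (Fin m)) :
    (Equiv.swap a b).trans ((Equiv.swap a b).trans f) = f := by
  ext x
  simp [Equiv.trans_apply]

lemma card_fiber {A : Finset (Fin m)} {a b : Fin m} (ha : a ∈ A) (hb : b ∈ A) (hab : a ≠ b)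
    (P Q : Equiv.Perm (Fin m) → Prop) [DecidablePred P] [DecidablePred Q]
    (hPQ : ∀ f ∈ matchingsOn m A, f a = b → (P f ↔ Q ((Equiv.swap a b).trans f))) :
    ((matchingsOn m A).filter (fun f => f a = b ∧ P f)).card
      = ((matchingsOn m (A \ {a, b})).filter Q).card := by
  apply Finset.card_bij' (fun f _ => (Equiv.swap a b).trans f)
    (fun g _ => (Equiv.swap a b).trans g)
  · intro f hf
    rw [Finset.mem_filter] at hf
    obtain ⟨hf1, hf2, hf3⟩ := hf
    rw [Finset.mem_filter]
    exact ⟨mo_swap_mem ha hb hab hf1 hf2, (hPQ f hf1 hf2).1 hf3⟩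
  · intro g hg
    rw [Finset.mem_filter] at hg
    obtain ⟨hg1, hg2⟩ := hg
    obtain ⟨h1, h2⟩ := mo_swap_mem' ha hb hab hg1
    rw [Finset.mem_filter]
    refine ⟨h1, h2, ?_⟩
    rw [hPQ _ h1 h2, swap_trans_twice]
    exact hg2
  · intro f _; exact swap_trans_twice a b f
  · intro g _; exact swap_trans_twice a b g

def nin (f : Equiv.Perm (Fin m)) (X : Finset (Fin m)) : ℕ :=
  (X.filter (fun y => f y ∈ X)).card

def cnt (m : ℕ) (A X : Finset (Fin m)) (x : ℕ) : ℕ :=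
  ((matchingsOn m A).filter (fun f => x ≤ nin f X)).card

lemma nin_swap_inX {A X : Finset (Fin m)} (hXA : X ⊆ A) {a b : Fin m}
    (ha : a ∈ X) (hb : b ∈ X) (hab : a ≠ b) {f : Equiv.Perm (Fin m)}
    (hf : f ∈ matchingsOn m A) (hfa : f a = b) :
    nin f X = nin ((Equiv.swap a b).trans f) (X \ {a, b}) + 2 := by
  have hf' := hf
  rw [mem_mo] at hf
  have hfb : f b = a := by rw [← hfa]; exact (hf.1 a (hXA ha)).1
  have key : ∀ y ∈ X, y ≠ a → y ≠ b → (f y ≠ a ∧ f y ≠ b ∧ (Equiv.swap a b).trans f y = f y) := by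
    intro y hy hya hyb
    refine ⟨?_, ?_, by simp [Equiv.trans_apply, Equiv.swap_apply_of_ne_of_ne hya hyb]⟩
    · intro h
      apply hyb
      have e := (hf.1 y (hXA hy)).1
      rw [h, hfa] at e
      exact e.symm
    · intro h
      exact hya (f.injective (h.trans hfa.symm))
  have hset : X.filter (fun y => f y ∈ X)
      = insert a (insert b ((X \ {a,b}).filter
          (fun y => ((Equiv.swap a b).trans f) y ∈ X \ {a,b}))) := by
    ext y
    simp only [Finset.mem_filter, Finset.mem_insert, Finset.mem_sdiff, mem_pair, Finset.mem_singleton]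
    constructor
    · rintro ⟨hyX, hfyX⟩
      by_cases hya : y = a
      · exact Or.inl hya
      by_cases hyb : y = b
      · exact Or.inr (Or.inl hyb)
      · obtain ⟨k1, k2, k3⟩ := key y hyX hya hyb
        exact Or.inr (Or.inr ⟨⟨hyX, by tauto⟩, by rw [k3]; exact ⟨hfyX, by tauto⟩⟩)
    · rintro (rfl | rfl | ⟨⟨hyX, hy2⟩, hgy⟩)
      · exact ⟨ha, by rw [hfa]; exact hb⟩
      · exact ⟨hb, by rw [hfb]; exact ha⟩
      · push_neg at hy2
        obtain ⟨k1, k2, k3⟩ := key y hyX hy2.1 hy2.2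
        rw [k3] at hgy
        exact ⟨hyX, hgy.1⟩
  rw [nin, hset]
  have hbni : b ∉ (X \ {a,b}).filter
      (fun y => ((Equiv.swap a b).trans f) y ∈ X \ {a,b}) := by
    simp [mem_pair]
  have hani : a ∉ insert b ((X \ {a,b}).filter
      (fun y => ((Equiv.swap a b).trans f) y ∈ X \ {a,b})) := by
    simp only [Finset.mem_insert]
    push_neg
    exact ⟨hab, by simp [mem_pair]⟩
  rw [Finset.card_insert_of_notMem hani, Finset.card_insert_of_notMem hbni]
  rfl

lemma nin_swap_outX {A X : Finset (Fin m)} (hXA : X ⊆ A) {a b : Fin m}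
    (ha : a ∈ X) (hbA : b ∈ A) (hb : b ∉ X) {f : Equiv.Perm (Fin m)}
    (hf : f ∈ matchingsOn m A) (hfa : f a = b) :
    nin f X = nin ((Equiv.swap a b).trans f) (X \ {a}) := by
  have hf' := hf
  rw [mem_mo] at hf
  have hab : a ≠ b := fun h => hb (h ▸ ha)
  have hfb : f b = a := by rw [← hfa]; exact (hf.1 a (hXA ha)).1
  simp only [nin]
  congr 1
  ext y
  simp only [Finset.mem_filter, Finset.mem_sdiff, Finset.mem_singleton]
  constructor
  · rintro ⟨hyX, hfyX⟩
    have hya : y ≠ a := by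
      rintro rfl
      rw [hfa] at hfyX
      exact hb hfyX
    have hyb : y ≠ b := fun h => hb (h ▸ hyX)
    have hfya : f y ≠ a := by
      intro h
      have e := (hf.1 y (hXA hyX)).1
      rw [h, hfa] at e
      exact hb (e ▸ hyX)
    have e1 : ((Equiv.swap a b).trans f) y = f y := by
      simp [Equiv.trans_apply, Equiv.swap_apply_of_ne_of_ne hya hyb]
    exact ⟨⟨hyX, hya⟩, by rw [e1]; exact ⟨hfyX, hfya⟩⟩
  · rintro ⟨⟨hyX, hya⟩, hgy⟩
    have hyb : y ≠ b := fun h => hb (h ▸ hyX)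
    have e1 : ((Equiv.swap a b).trans f) y = f y := by
      simp [Equiv.trans_apply, Equiv.swap_apply_of_ne_of_ne hya hyb]
    rw [e1] at hgy
    exact ⟨hyX, hgy.1⟩

lemma fiber_inX {A X : Finset (Fin m)} (hXA : X ⊆ A) {a b : Fin m}
    (ha : a ∈ X) (hb : b ∈ X) (hab : a ≠ b) (x : ℕ) :
    ((matchingsOn m A).filter (fun f => f a = b ∧ x ≤ nin f X)).card
      = cnt m (A \ {a,b}) (X \ {a,b}) (x - 2) := by
  apply card_fiber (hXA ha) (hXA hb) hab
  intro f hf hfa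
  rw [nin_swap_inX hXA ha hb hab hf hfa]
  omega

lemma fiber_outX {A X : Finset (Fin m)} (hXA : X ⊆ A) {a b : Fin m}
    (ha : a ∈ X) (hbA : b ∈ A) (hb : b ∉ X) (x : ℕ) :
    ((matchingsOn m A).filter (fun f => f a = b ∧ x ≤ nin f X)).card
      = cnt m (A \ {a,b}) (X \ {a}) x := by
  apply card_fiber (hXA ha) hbA (fun h => hb (h ▸ ha))
  intro f hf hfa
  rw [nin_swap_outX hXA ha hbA hb hf hfa]

lemma fiber_t {A : Finset (Fin m)} {a b : Fin m} (ha : a ∈ A) (hb : b ∈ A) (hab : a ≠ b) :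
    ((matchingsOn m A).filter (fun f => f a = b)).card
      = (matchingsOn m (A \ {a,b})).card := by
  have h := card_fiber ha hb hab (fun _ => True) (fun _ => True)
    (fun f _ _ => Iff.rfl)
  simpa using h

lemma cnt_decomp {A X : Finset (Fin m)} (hXA : X ⊆ A) {a : Fin m} (ha : a ∈ X) (x : ℕ) :
    cnt m A X x = ∑ b ∈ X.erase a, cnt m (A \ {a,b}) (X \ {a,b}) (x-2)
      + ∑ b ∈ A \ X, cnt m (A \ {a,b}) (X \ {a}) x := by
  have haA : a ∈ A := hXA ha
  have hdec : cnt m A X x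
      = ∑ b ∈ A.erase a,
          ((matchingsOn m A).filter (fun f => f a = b ∧ x ≤ nin f X)).card := by
    rw [cnt, Finset.card_eq_sum_card_fiberwise
      (f := fun f : Equiv.Perm (Fin m) => f a) (t := A.erase a) ?_]
    · apply Finset.sum_congr rfl
      intro b _
      rw [Finset.filter_filter]
      apply congrArg
      apply Finset.filter_congr
      intro f _
      tauto
    · intro f hf
      rw [Finset.mem_coe, Finset.mem_filter] at hf
      rw [Finset.mem_coe, Finset.mem_erase]
      exact ⟨(mem_mo.1 hf.1).1 a haA |>.2, mo_apply_mem hf.1 haA⟩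
  have hsplit : A.erase a = (X.erase a) ∪ (A \ X) := by
    ext y
    simp only [Finset.mem_erase, Finset.mem_union, Finset.mem_sdiff]
    constructor
    · rintro ⟨hya, hyA⟩
      by_cases hyX : y ∈ X
      · exact Or.inl ⟨hya, hyX⟩
      · exact Or.inr ⟨hyA, hyX⟩
    · rintro (⟨hya, hyX⟩ | ⟨hyA, hyX⟩)
      · exact ⟨hya, hXA hyX⟩
      · exact ⟨fun h => hyX (h ▸ ha), hyA⟩
  have hdisj : Disjoint (X.erase a) (A \ X) := by
    rw [Finset.disjoint_left]
    intro y hy hy2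
    rw [Finset.mem_erase] at hy
    rw [Finset.mem_sdiff] at hy2
    exact hy2.2 hy.2
  rw [hdec, hsplit, Finset.sum_union hdisj]
  congr 1
  · apply Finset.sum_congr rfl
    intro b hb
    rw [Finset.mem_erase] at hb
    exact fiber_inX hXA ha hb.2 (fun h => hb.1 h.symm) x
  · apply Finset.sum_congr rfl
    intro b hb
    rw [Finset.mem_sdiff] at hb
    exact fiber_outX hXA ha hb.1 hb.2 x

lemma t_decomp {A : Finset (Fin m)} {a : Fin m} (ha : a ∈ A) :
    (matchingsOn m A).card = ∑ b ∈ A.erase a, (matchingsOn m (A \ {a,b})).card := by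
  rw [Finset.card_eq_sum_card_fiberwise
    (f := fun f : Equiv.Perm (Fin m) => f a) (t := A.erase a) ?_]
  · apply Finset.sum_congr rfl
    intro b hb
    rw [Finset.mem_erase] at hb
    exact fiber_t ha hb.2 (fun h => hb.1 h.symm)
  · intro f hf
    rw [Finset.mem_coe, Finset.mem_erase]
    exact ⟨(mem_mo.1 hf).1 a ha |>.2, mo_apply_mem hf ha⟩

lemma mo_singleton {A : Finset (Fin m)} (hA : A.card = 1) : matchingsOn m A = ∅ := by
  obtain ⟨a, rfl⟩ := Finset.card_eq_one.1 hA
  ext f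
  simp only [Finset.notMem_empty, iff_false]
  intro hf
  have h1 := mo_apply_mem hf (Finset.mem_singleton_self a)
  rw [Finset.mem_singleton] at h1
  exact ((mem_mo.1 hf).1 a (Finset.mem_singleton_self a)).2 h1

lemma pair_card_sdiff {A : Finset (Fin m)} {a b : Fin m} (ha : a ∈ A) (hb : b ∈ A)
    (hab : a ≠ b) : (A \ {a,b}).card = A.card - 2 := by
  rw [Finset.card_sdiff_of_subset]
  · rw [Finset.card_insert_of_notMem (by simp [hab]), Finset.card_singleton]
  · intro y hy
    rw [mem_pair] at hy
    rcases hy with rfl | rfl <;> assumption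

lemma mo_card_eq : ∀ (n : ℕ) (A B : Finset (Fin m)), A.card = n → B.card = n →
    (matchingsOn m A).card = (matchingsOn m B).card := by
  intro n
  induction n using Nat.strong_induction_on with
  | _ n ih =>
    match n with
    | 0 =>
      intro A B hA hB
      rw [Finset.card_eq_zero] at hA hB
      rw [hA, hB]
    | 1 =>
      intro A B hA hB
      rw [mo_singleton hA, mo_singleton hB]
    | (n+2) =>
      intro A B hA hB
      have hAne : A.Nonempty := Finset.card_pos.1 (by omega)
      have hBne : B.Nonempty := Finset.card_pos.1 (by omega)
      obtain ⟨a, haA⟩ := hAne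
      obtain ⟨a', haB⟩ := hBne
      have hEA : (A.erase a).card = n + 1 := by
        rw [Finset.card_erase_of_mem haA, hA]
        omega
      have hEB : (B.erase a').card = n + 1 := by
        rw [Finset.card_erase_of_mem haB, hB]
        omega
      obtain ⟨b', hb'⟩ := Finset.card_pos.1 (by omega : 0 < (B.erase a').card)
      have hb'B : b' ∈ B := Finset.mem_of_mem_erase hb'
      have hb'ne : a' ≠ b' := fun h => (Finset.mem_erase.1 hb').1 h.symm
      have hcardB' : (B \ {a', b'}).card = n := by
        rw [pair_card_sdiff haB hb'B hb'ne, hB]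
        omega
      have hterm : ∀ C : Finset (Fin m), ∀ c : Fin m, c ∈ C → C.card = n + 2 →
          (matchingsOn m C).card = (n+1) * (matchingsOn m (B \ {a', b'})).card := by
        intro C c hc hC
        rw [t_decomp hc]
        have hterm2 : ∀ b ∈ C.erase c,
            (matchingsOn m (C \ {c, b})).card = (matchingsOn m (B \ {a', b'})).card := by
          intro b hb
          have hbC : b ∈ C := Finset.mem_of_mem_erase hb
          have hbne : c ≠ b := fun h => (Finset.mem_erase.1 hb).1 h.symm
          exact ih n (by omega) _ _ (by rw [pair_card_sdiff hc hbC hbne, hC]; omega) hcardB'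
        rw [Finset.sum_congr rfl hterm2, Finset.sum_const,
          Finset.card_erase_of_mem hc, hC, smul_eq_mul,
          show n + 2 - 1 = n + 1 from rfl]
      rw [hterm A a haA hA, hterm B a' haB hB]

lemma main_bound : ∀ (n : ℕ) (A X : Finset (Fin m)), A.card = n → X ⊆ A → Even n →
    ∀ p : ℝ, 0 ≤ p → p ≤ 1 → p^2 ≤ 1/2 →
    ((X.card : ℝ) - 1) ≤ p^2 * ((n : ℝ) - 1) →
    ∀ x : ℕ, (cnt m A X x : ℝ) ≤ binomialTail X.card p x * ((matchingsOn m A).card : ℝ) := by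
  intro n
  induction n using Nat.strong_induction_on with
  | _ n ih =>
    intro A X hA hXA hev p hp0 hp1 hp2 hinv x
    rcases Finset.eq_empty_or_nonempty X with rfl | ⟨a, ha⟩
    · rcases Nat.eq_zero_or_pos x with rfl | hx
      · rw [Finset.card_empty, bt_zero, one_mul]
        exact Nat.cast_le.2 (Finset.card_filter_le _ _)
      · have hz : cnt m A ∅ x = 0 := by
          rw [cnt, Finset.card_eq_zero, Finset.filter_eq_empty_iff]
          intro f _
          simp only [nin, Finset.filter_empty, Finset.card_empty]
          omega
        rw [hz]
        push_cast
        exact mul_nonneg (bt_nonneg hp0 hp1 _ _) (Nat.cast_nonneg _)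
    · have haA := hXA ha
      set k := X.card with hk
      have hk1 : 1 ≤ k := Finset.card_pos.2 ⟨a, ha⟩
      have hn1 : 1 ≤ n := hA ▸ Finset.card_pos.2 ⟨a, haA⟩
      have hn2 : 2 ≤ n := by
        rcases hev with ⟨t, ht⟩; omega
      have hkn : k ≤ n := hA ▸ Finset.card_le_card hXA
      have hevn2 : Even (n - 2) := by
        rcases hev with ⟨t, ht⟩; exact ⟨t - 1, by omega⟩
      have hp2' : p^2 ≤ 1 := by linarith
      -- uniform count of submatchings
      have hEA : (A.erase a).card = n - 1 := by
        rw [Finset.card_erase_of_mem haA, hA]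
      obtain ⟨b₀, hb₀⟩ := Finset.card_pos.1 (show 0 < (A.erase a).card by omega)
      have hb₀A : b₀ ∈ A := Finset.mem_of_mem_erase hb₀
      have hb₀ne : a ≠ b₀ := fun h => (Finset.mem_erase.1 hb₀).1 h.symm
      set t2 := (matchingsOn m (A \ {a, b₀})).card with ht2
      have ht2card : (A \ {a, b₀}).card = n - 2 := by
        rw [pair_card_sdiff haA hb₀A hb₀ne, hA]
      have hteq : ∀ b ∈ A.erase a, (matchingsOn m (A \ {a, b})).card = t2 := by
        intro b hb
        refine mo_card_eq (n-2) _ _ ?_ ht2card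
        rw [pair_card_sdiff haA (Finset.mem_of_mem_erase hb)
          (fun h => (Finset.mem_erase.1 hb).1 h.symm), hA]
      have htA : (matchingsOn m A).card = (n-1) * t2 := by
        rw [t_decomp haA, Finset.sum_congr rfl hteq, Finset.sum_const, hEA, smul_eq_mul]
      -- per-term bounds
      have hbound1 : ∀ b ∈ X.erase a,
          (cnt m (A \ {a,b}) (X \ {a,b}) (x-2) : ℝ)
            ≤ binomialTail (k-2) p (x-2) * (t2 : ℝ) := by
        intro b hb
        have hbX : b ∈ X := Finset.mem_of_mem_erase hb
        have hbne : a ≠ b := fun h => (Finset.mem_erase.1 hb).1 h.symm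
        have hk2 : 2 ≤ k := Finset.one_lt_card.2 ⟨a, ha, b, hbX, hbne⟩
        have hcA : (A \ {a,b}).card = n - 2 := by
          rw [pair_card_sdiff haA (hXA hbX) hbne, hA]
        have hcX : (X \ {a,b}).card = k - 2 := pair_card_sdiff ha hbX hbne
        have hsub : X \ {a,b} ⊆ A \ {a,b} :=
          Finset.sdiff_subset_sdiff hXA (Finset.Subset.refl _)
        have hinv' : (((X \ {a,b}).card : ℝ) - 1) ≤ p^2 * (((n-2 : ℕ) : ℝ) - 1) := by
          rw [hcX]
          rw [Nat.cast_sub (by omega : 2 ≤ k), Nat.cast_sub (by omega : 2 ≤ n)]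
          push_cast
          nlinarith [hinv]
        have h := ih (n-2) (by omega) _ _ hcA hsub hevn2 p hp0 hp1 hp2 hinv' (x-2)
        rw [hcX] at h
        rwa [hteq b (Finset.mem_erase.2 ⟨fun h' => hbne h'.symm, hXA hbX⟩)] at h
      have hbound2 : ∀ b ∈ A \ X,
          (cnt m (A \ {a,b}) (X \ {a}) x : ℝ)
            ≤ binomialTail (k-1) p x * (t2 : ℝ) := by
        intro b hb
        rw [Finset.mem_sdiff] at hb
        have hbne : a ≠ b := fun h => hb.2 (h ▸ ha)
        have hcA : (A \ {a,b}).card = n - 2 := by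
          rw [pair_card_sdiff haA hb.1 hbne, hA]
        have hcX : (X \ {a}).card = k - 1 := by
          rw [Finset.card_sdiff_of_subset (Finset.singleton_subset_iff.2 ha), Finset.card_singleton]
        have hsub : X \ {a} ⊆ A \ {a,b} := by
          intro y hy
          rw [Finset.mem_sdiff, Finset.mem_singleton] at hy
          rw [Finset.mem_sdiff, mem_pair]
          exact ⟨hXA hy.1, by rintro (rfl | rfl); exact hy.2 rfl; exact hb.2 hy.1⟩
        have hinv' : (((X \ {a}).card : ℝ) - 1) ≤ p^2 * (((n-2 : ℕ) : ℝ) - 1) := by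
          rw [hcX]
          rw [Nat.cast_sub (by omega : 1 ≤ k), Nat.cast_sub (by omega : 2 ≤ n)]
          push_cast
          nlinarith [hinv]
        have h := ih (n-2) (by omega) _ _ hcA hsub hevn2 p hp0 hp1 hp2 hinv' x
        rw [hcX] at h
        rwa [hteq b (Finset.mem_erase.2 ⟨fun h' => hbne h'.symm, hb.1⟩)] at h
      -- assemble
      rw [cnt_decomp hXA ha x]
      push_cast
      have hcard1 : (X.erase a).card = k - 1 := by
        rw [Finset.card_erase_of_mem ha]
      have hcard2 : (A \ X).card = n - k := by
        rw [Finset.card_sdiff_of_subset hXA, hA]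
      have hsum1 : (∑ b ∈ X.erase a, (cnt m (A \ {a,b}) (X \ {a,b}) (x-2) : ℝ))
          ≤ ((k - 1 : ℕ) : ℝ) * (binomialTail (k-2) p (x-2) * (t2 : ℝ)) := by
        calc (∑ b ∈ X.erase a, (cnt m (A \ {a,b}) (X \ {a,b}) (x-2) : ℝ))
            ≤ (X.erase a).card • (binomialTail (k-2) p (x-2) * (t2 : ℝ)) :=
              Finset.sum_le_card_nsmul _ _ _ hbound1
          _ = ((k - 1 : ℕ) : ℝ) * (binomialTail (k-2) p (x-2) * (t2 : ℝ)) := by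
              rw [hcard1, nsmul_eq_mul]
      have hsum2 : (∑ b ∈ A \ X, (cnt m (A \ {a,b}) (X \ {a}) x : ℝ))
          ≤ ((n - k : ℕ) : ℝ) * (binomialTail (k-1) p x * (t2 : ℝ)) := by
        calc (∑ b ∈ A \ X, (cnt m (A \ {a,b}) (X \ {a}) x : ℝ))
            ≤ (A \ X).card • (binomialTail (k-1) p x * (t2 : ℝ)) :=
              Finset.sum_le_card_nsmul _ _ _ hbound2
          _ = ((n - k : ℕ) : ℝ) * (binomialTail (k-1) p x * (t2 : ℝ)) := by
              rw [hcard2, nsmul_eq_mul]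
      have htAR : ((matchingsOn m A).card : ℝ) = ((n:ℝ) - 1) * (t2 : ℝ) := by
        rw [htA]
        push_cast [Nat.cast_sub (by omega : 1 ≤ n)]
        ring
      rw [htAR]
      have hc1 : ((k - 1 : ℕ) : ℝ) = (k : ℝ) - 1 := by
        rw [Nat.cast_sub (by omega : 1 ≤ k)]; norm_num
      have hc2 : ((n - k : ℕ) : ℝ) = (n : ℝ) - (k : ℝ) := by
        rw [Nat.cast_sub hkn]
      rcases eq_or_lt_of_le hk1 with heq | hk2
      · -- k = 1
        have hkk : k = 1 := heq.symm
        have hT01 : binomialTail 0 p x ≤ binomialTail 1 p x := bt_mono_n hp0 hp1 0 x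
        have ht2R : (0:ℝ) ≤ (t2 : ℝ) := Nat.cast_nonneg _
        have hnn : (0:ℝ) ≤ (n : ℝ) - 1 := by
          have : (1:ℝ) ≤ (n:ℝ) := by exact_mod_cast hn1
          linarith
        calc (∑ b ∈ X.erase a, (cnt m (A \ {a,b}) (X \ {a,b}) (x-2) : ℝ))
              + (∑ b ∈ A \ X, (cnt m (A \ {a,b}) (X \ {a}) x : ℝ))
            ≤ ((k - 1 : ℕ) : ℝ) * (binomialTail (k-2) p (x-2) * (t2 : ℝ))
              + ((n - k : ℕ) : ℝ) * (binomialTail (k-1) p x * (t2 : ℝ)) :=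
              add_le_add hsum1 hsum2
          _ = ((n:ℝ) - 1) * (binomialTail 0 p x * (t2 : ℝ)) := by
              rw [hc1, hc2, hkk]; push_cast; ring
          _ ≤ ((n:ℝ) - 1) * (binomialTail 1 p x * (t2 : ℝ)) := by
              apply mul_le_mul_of_nonneg_left _ hnn
              exact mul_le_mul_of_nonneg_right hT01 ht2R
          _ = binomialTail k p x * (((n:ℝ) - 1) * (t2 : ℝ)) := by
              rw [hkk]; ring
      · -- k ≥ 2
        have hnR : (1:ℝ) < (n : ℝ) := by
          have : (1:ℕ) < n := by omega
          exact_mod_cast this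
        have hnpos : (0:ℝ) < (n:ℝ) - 1 := by linarith
        set q : ℝ := ((k:ℝ) - 1) / ((n:ℝ) - 1) with hq
        have hq0 : 0 ≤ q := by
          apply div_nonneg _ (le_of_lt hnpos)
          have : (1:ℝ) ≤ (k:ℝ) := by exact_mod_cast hk1
          linarith
        have hqle : q ≤ p^2 := by
          rw [hq, div_le_iff₀ hnpos]
          exact hinv
        have hkey := bt_key hp0 hp1 hq0 hqle (k-2) x
        rw [show k - 2 + 1 = k - 1 by omega, show k - 2 + 2 = k by omega] at hkey
        have h1 : (k:ℝ) - 1 = q * ((n:ℝ) - 1) := by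
          rw [hq, div_mul_cancel₀]
          exact ne_of_gt hnpos
        have h2 : (n:ℝ) - (k:ℝ) = (1 - q) * ((n:ℝ) - 1) := by
          rw [hq]
          field_simp
          ring
        have ht2R : (0:ℝ) ≤ (t2 : ℝ) := Nat.cast_nonneg _
        calc (∑ b ∈ X.erase a, (cnt m (A \ {a,b}) (X \ {a,b}) (x-2) : ℝ))
              + (∑ b ∈ A \ X, (cnt m (A \ {a,b}) (X \ {a}) x : ℝ))
            ≤ ((k - 1 : ℕ) : ℝ) * (binomialTail (k-2) p (x-2) * (t2 : ℝ))
              + ((n - k : ℕ) : ℝ) * (binomialTail (k-1) p x * (t2 : ℝ)) :=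
              add_le_add hsum1 hsum2
          _ = (q * binomialTail (k-2) p (x-2) + (1-q) * binomialTail (k-1) p x)
              * (((n:ℝ) - 1) * (t2 : ℝ)) := by
              rw [hc1, hc2, h1, h2]; ring
          _ ≤ binomialTail k p x * (((n:ℝ) - 1) * (t2 : ℝ)) := by
              apply mul_le_mul_of_nonneg_right hkey
              exact mul_nonneg (le_of_lt hnpos) ht2R


/-- For a uniformly random perfect matching `F` of a set of `m` points and a subset `X`
of size `k ≤ m/2`, the number `|X ∩ F(X)|` of points of `X` matched within `X` is
stochastically dominated by `Bin(k, √(k/m))`. -/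
theorem matching_self_intersection_dominated_by_binomial
    (m k : ℕ) (hm : Even m) (X : Finset (Fin m)) (hX : X.card = k) (hk : 2 * k ≤ m) :
    ∀ x : ℕ,
      (((perfectMatchings m).filter
          (fun f : Equiv.Perm (Fin m) => x ≤ (X ∩ X.image ⇑f).card)).card : ℝ) /
        ((perfectMatchings m).card : ℝ) ≤
      binomialTail k (Real.sqrt ((k : ℝ) / m)) x := by
  intro x
  have hmo : perfectMatchings m = matchingsOn m Finset.univ := by
    ext f
    simp [perfectMatchings, matchingsOn]
  have hfilter : (perfectMatchings m).filter
      (fun f : Equiv.Perm (Fin m) => x ≤ (X ∩ X.image ⇑f).card)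
      = (matchingsOn m Finset.univ).filter (fun f => x ≤ nin f X) := by
    rw [hmo]
    apply Finset.filter_congr
    intro f hf
    have hXf : X ∩ X.image ⇑f = X.filter (fun y => f y ∈ X) := by
      ext y
      simp only [Finset.mem_inter, Finset.mem_filter, Finset.mem_image]
      constructor
      · rintro ⟨hy, z, hz, rfl⟩
        refine ⟨hy, ?_⟩
        rw [((mem_mo.1 hf).1 z (Finset.mem_univ z)).1]
        exact hz
      · rintro ⟨hy, hfy⟩
        exact ⟨hy, f y, hfy, ((mem_mo.1 hf).1 y (Finset.mem_univ y)).1⟩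
    simp [nin, hXf]
  rw [hfilter, hmo]
  -- set up p
  set p : ℝ := Real.sqrt ((k : ℝ) / m) with hp
  have hdiv0 : (0:ℝ) ≤ (k:ℝ)/m := by positivity
  have hp0 : 0 ≤ p := Real.sqrt_nonneg _
  have hpsq : p^2 = (k:ℝ)/m := Real.sq_sqrt hdiv0
  have hkm2 : (k:ℝ)/m ≤ 1/2 := by
    rcases Nat.eq_zero_or_pos m with rfl | hm0
    · have : k = 0 := by omega
      simp [this]
    · have hmR : (0:ℝ) < m := by exact_mod_cast hm0
      rw [div_le_iff₀ hmR]
      have : (2*k : ℝ) ≤ m := by exact_mod_cast hk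
      linarith
  have hp1 : p ≤ 1 := Real.sqrt_le_one.2 (by linarith)
  have hp2 : p^2 ≤ 1/2 := by rw [hpsq]; exact hkm2
  have hinv : ((X.card : ℝ) - 1) ≤ p^2 * ((m:ℝ) - 1) := by
    rw [hX, hpsq]
    rcases Nat.eq_zero_or_pos m with rfl | hm0
    · have : k = 0 := by omega
      simp [this]
    · have hmR : (0:ℝ) < m := by exact_mod_cast hm0
      have hkm : (k:ℝ) ≤ (m:ℝ) := by
        have : k ≤ m := by omega
        exact_mod_cast this
      rw [div_mul_eq_mul_div, le_div_iff₀ hmR]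
      nlinarith
  have hcardu : (Finset.univ : Finset (Fin m)).card = m := by simp
  have hmain := main_bound m Finset.univ X hcardu (Finset.subset_univ X) hm
    p hp0 hp1 hp2 hinv x
  rw [hX] at hmain
  rcases Nat.eq_zero_or_pos (matchingsOn m Finset.univ).card with h0 | hpos
  · rw [h0]
    push_cast
    rw [div_zero]
    exact bt_nonneg hp0 hp1 _ _
  · have hposR : (0:ℝ) < ((matchingsOn m Finset.univ).card : ℝ) := by exact_mod_cast hpos
    rw [div_le_iff₀ hposR]
    exact hmain
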